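/- Let h : ℂ → ℂ be defined by h(z) = (4/27)·(z²−z+1)³/(z²·(1−z)²). For every z ∈ ℂ with z ≠ 0 and z ≠ 1, if the complex derivative of h at z vanishes, then h(z) = 0 or h(z) = 1. (In other words, all finite critical values of the rational function h lie in {0, 1}, so that h branches only over 0, 1 and ∞ and is a Belyi function.) -/

import Mathlib

noncomputable def h : ℂ → ℂ :=
  fun z => (4 / 27) * (z ^ 2 - z + 1) ^ 3 / (z ^ 2 * (1 - z) ^ 2)

theorem stmt_0 :
    ∀ z : ℂ, z ≠ 0 → z ≠ 1 → deriv h z = 0 → h z = 0 ∨ h z = 1 := by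
  intro z hz0 hz1 hd
  have hz1' : (1 : ℂ) - z ≠ 0 := sub_ne_zero.mpr (Ne.symm hz1)
  have hD : z ^ 2 * (1 - z) ^ 2 ≠ 0 := by
    exact mul_ne_zero (pow_ne_zero _ hz0) (pow_ne_zero _ hz1')
  -- derivative of h at z
  have hnum : HasDerivAt (fun z : ℂ => (4 / 27) * (z ^ 2 - z + 1) ^ 3)
      ((4 / 27) * (3 * (z ^ 2 - z + 1) ^ 2 * (2 * z - 1))) z := by
    have h1 : HasDerivAt (fun z : ℂ => z ^ 2 - z + 1) (2 * z - 1) z := by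
      have := ((hasDerivAt_pow 2 z).sub (hasDerivAt_id z)).add_const 1
      simpa using this
    have := (h1.fun_pow 3).const_mul (4 / 27 : ℂ)
    refine this.congr_deriv ?_
    norm_num
  have hden : HasDerivAt (fun z : ℂ => z ^ 2 * (1 - z) ^ 2)
      (2 * z * (1 - z) ^ 2 + z ^ 2 * (2 * (1 - z) * (-1))) z := by
    have h1 : HasDerivAt (fun z : ℂ => z ^ 2) (2 * z) z := by
      simpa using hasDerivAt_pow 2 z
    have h2 : HasDerivAt (fun z : ℂ => (1 - z) ^ 2) (2 * (1 - z) * (-1)) z := by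
      have hb : HasDerivAt (fun z : ℂ => 1 - z) (-1) z := by
        simpa using (hasDerivAt_id z).const_sub 1
      have := hb.fun_pow 2
      refine this.congr_deriv ?_
      ring
    exact h1.mul h2
  have hH : HasDerivAt h
      (((4 / 27) * (3 * (z ^ 2 - z + 1) ^ 2 * (2 * z - 1)) * (z ^ 2 * (1 - z) ^ 2)
        - (4 / 27) * (z ^ 2 - z + 1) ^ 3 * (2 * z * (1 - z) ^ 2 + z ^ 2 * (2 * (1 - z) * (-1))))
        / (z ^ 2 * (1 - z) ^ 2) ^ 2) z := hnum.div hden hD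
  rw [hH.deriv] at hd
  have hnum0 : (4 / 27) * (3 * (z ^ 2 - z + 1) ^ 2 * (2 * z - 1)) * (z ^ 2 * (1 - z) ^ 2)
      - (4 / 27) * (z ^ 2 - z + 1) ^ 3 * (2 * z * (1 - z) ^ 2 + z ^ 2 * (2 * (1 - z) * (-1))) = 0 :=
    by
    have := (div_eq_zero_iff.mp hd)
    rcases this with h | h
    · exact h
    · exact absurd (pow_eq_zero_iff (by norm_num) |>.mp h) hD
  have hfac : (z ^ 2 - z + 1) ^ 2 * z * (1 - z) * ((2 * z - 1) * (2 + z - z ^ 2)) = 0 := by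
    have h27 : (27 : ℂ) / 4 ≠ 0 := by norm_num
    have := congrArg (fun w => (27 / 4 : ℂ) * w) hnum0
    simp only [mul_zero] at this
    calc (z ^ 2 - z + 1) ^ 2 * z * (1 - z) * ((2 * z - 1) * (2 + z - z ^ 2))
        = (27 / 4 : ℂ) * ((4 / 27) * (3 * (z ^ 2 - z + 1) ^ 2 * (2 * z - 1)) * (z ^ 2 * (1 - z) ^ 2)
        - (4 / 27) * (z ^ 2 - z + 1) ^ 3 * (2 * z * (1 - z) ^ 2 + z ^ 2 * (2 * (1 - z) * (-1)))) := by
          ring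
      _ = 0 := this
  rcases mul_eq_zero.mp hfac with h1 | h2
  · rcases mul_eq_zero.mp h1 with h3 | h4
    · rcases mul_eq_zero.mp h3 with h5 | h6
      · -- (z²-z+1)² = 0 → h z = 0
        left
        have : z ^ 2 - z + 1 = 0 := by
          exact pow_eq_zero_iff (by norm_num) |>.mp h5
        simp only [h, this]
        ring
      · exact absurd h6 hz0
    · exact absurd h4 hz1'
  · rcases mul_eq_zero.mp h2 with h3 | h4
    · -- z = 1/2
      right
      have hz : z = 1 / 2 := by linear_combination h3 / 2
      simp only [h, hz]
      norm_num
    · -- z² - z - 2 = 0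
      right
      have hrel : z ^ 2 - z - 2 = 0 := by linear_combination -h4
      have key : 4 * (z ^ 2 - z + 1) ^ 3 = 27 * (z ^ 2 * (1 - z) ^ 2) := by
        linear_combination (4 * z ^ 4 - 8 * z ^ 3 - 3 * z ^ 2 + 7 * z - 2) * hrel
      simp only [h]
      rw [div_eq_one_iff_eq hD]
      linear_combination key / 27
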